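/- Let p and q be probability mass functions on a finite type α with p(x) + q(x) > 0 for all x. Then ∑ x, p(x)*log(p(x)/(p(x)+q(x))) + q(x)*log(q(x)/(p(x)+q(x))) = -log 4 + 2 * JSD(p, q), where JSD(p,q) = (1/2)*KL(p ‖ m) + (1/2)*KL(q ‖ m) with m = (p+q)/2, under the convention 0 * log 0 = 0. -/
import Mathlib

theorem stmt_4 {α : Type*} [Fintype α] (p q : α → ℝ)
    (hp : ∀ x, 0 ≤ p x) (hq : ∀ x, 0 ≤ q x)
    (hpq : ∀ x, 0 < p x + q x)
    (hps : ∑ x, p x = 1) (hqs : ∑ x, q x = 1) :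
    ∑ x, (p x * Real.log (p x / (p x + q x)) + q x * Real.log (q x / (p x + q x))) =
    -Real.log 4 + 2 * ((1 / 2) * ∑ x, p x * Real.log (p x / ((p x + q x) / 2)) +
                       (1 / 2) * ∑ x, q x * Real.log (q x / ((p x + q x) / 2))) := by
  have key : ∀ (f : α → ℝ), (∀ x, 0 ≤ f x) →
      ∀ x, f x * Real.log (f x / ((p x + q x) / 2)) =
        f x * Real.log (f x / (p x + q x)) + f x * Real.log 2 := by
    intro f hf x
    rcases eq_or_lt_of_le (hf x) with h | h
    · simp [← h]
    · have hs := hpq x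
      have : f x / ((p x + q x) / 2) = f x / (p x + q x) * 2 := by
        field_simp
      rw [this, Real.log_mul (by positivity) (by norm_num), mul_add]
  have h1 : ∑ x, p x * Real.log (p x / ((p x + q x) / 2)) =
      (∑ x, p x * Real.log (p x / (p x + q x))) + Real.log 2 := by
    simp_rw [key p hp, Finset.sum_add_distrib, ← Finset.sum_mul, hps, one_mul]
  have h2 : ∑ x, q x * Real.log (q x / ((p x + q x) / 2)) =
      (∑ x, q x * Real.log (q x / (p x + q x))) + Real.log 2 := by
    simp_rw [key q hq, Finset.sum_add_distrib, ← Finset.sum_mul, hqs, one_mul]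
  have h4 : Real.log 4 = 2 * Real.log 2 := by
    rw [show (4:ℝ) = 2^2 by norm_num, Real.log_pow]; push_cast; ring
  rw [h1, h2, h4, Finset.sum_add_distrib]; ring
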